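/- Let K, σ, S > 0 and r ∈ ℝ. For t̃ > 0 define d₁(t̃) = (log(S/K) + (r + σ²/2) t̃²)/(σ t̃), d₂(t̃) = d₁(t̃) − σ t̃, and C̃(t̃) = S Φ(d₁(t̃)) − K e^{−r t̃²} Φ(d₂(t̃)), where Φ is the standard normal cumulative distribution function. Then C̃ is twice differentiable on (0, ∞) and the second derivative C̃″(t̃) has a finite limit as t̃ → 0⁺. -/

import Mathlib

open Real Filter MeasureTheory Set Topology

/-- The standard normal cumulative distribution function
`Φ(x) = (2π)^{-1/2} ∫_{-∞}^x e^{-u²/2} du`. -/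
noncomputable def stdCDF (x : ℝ) : ℝ :=
  (Real.sqrt (2 * Real.pi))⁻¹ * ∫ u in Set.Iic x, Real.exp (-u ^ 2 / 2)

/-- The standard normal density. -/
noncomputable def gPDF (x : ℝ) : ℝ := (Real.sqrt (2 * Real.pi))⁻¹ * Real.exp (-x ^ 2 / 2)

lemma gPDF_pos (x : ℝ) : 0 < gPDF x := by
  unfold gPDF
  have := Real.pi_pos
  positivity

lemma gauss_integrable : Integrable (fun u : ℝ => Real.exp (-u ^ 2 / 2)) := by
  have h := integrable_exp_neg_mul_sq (by norm_num : (0:ℝ) < 1/2)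
  refine h.congr (Eventually.of_forall fun x => ?_)
  ring_nf

lemma hasDerivAt_gPDF (x : ℝ) : HasDerivAt gPDF (-x * gPDF x) x := by
  unfold gPDF
  have h : HasDerivAt (fun y : ℝ => Real.exp (-y ^ 2 / 2)) (Real.exp (-x^2/2) * (-x)) x := by
    have h2 : HasDerivAt (fun y : ℝ => -y ^ 2 / 2) (-x) x := by
      have := ((hasDerivAt_pow 2 x).neg).div_const 2
      refine this.congr_deriv ?_; push_cast; ring
    exact (Real.hasDerivAt_exp _).comp x h2
  refine (h.const_mul ((Real.sqrt (2 * Real.pi))⁻¹)).congr_deriv ?_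
  ring

lemma hasDerivAt_stdCDF (x : ℝ) : HasDerivAt stdCDF (gPDF x) x := by
  have hint : ∀ y : ℝ, IntegrableOn (fun u : ℝ => Real.exp (-u ^ 2 / 2)) (Iic y) :=
    fun y => gauss_integrable.integrableOn
  have key : ∀ y : ℝ, stdCDF y = (Real.sqrt (2*Real.pi))⁻¹ *
      ((∫ u in Set.Iic (0:ℝ), Real.exp (-u^2/2)) + ∫ u in (0:ℝ)..y, Real.exp (-u^2/2)) := by
    intro y
    rw [stdCDF]
    congr 1
    rw [← intervalIntegral.integral_Iic_sub_Iic (hint 0) (hint y)]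
    ring
  have hd : HasDerivAt (fun y => ∫ u in (0:ℝ)..y, Real.exp (-u^2/2)) (Real.exp (-x^2/2)) x := by
    refine intervalIntegral.integral_hasDerivAt_right
      (gauss_integrable.intervalIntegrable) ?_ (by fun_prop)
    exact (Continuous.stronglyMeasurable (by fun_prop)).stronglyMeasurableAtFilter
  have := (hd.const_add (∫ u in Set.Iic (0:ℝ), Real.exp (-u^2/2))).const_mul
      ((Real.sqrt (2*Real.pi))⁻¹)
  refine HasDerivAt.congr_of_eventuallyEq ?_ (Eventually.of_forall key)
  exact this

lemma continuous_stdCDF : Continuous stdCDF :=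
  continuous_iff_continuousAt.2 fun x => (hasDerivAt_stdCDF x).differentiableAt.continuousAt

lemma stdCDF_tendsto_atTop : Tendsto stdCDF atTop
    (𝓝 ((Real.sqrt (2 * Real.pi))⁻¹ * ∫ u : ℝ, Real.exp (-u ^ 2 / 2))) := by
  have h := MeasureTheory.tendsto_setIntegral_of_monotone (μ := volume)
      (s := fun y : ℝ => Iic y) (f := fun u : ℝ => Real.exp (-u ^ 2 / 2))
      (fun y => measurableSet_Iic) (fun p q hpq => Iic_subset_Iic.2 hpq)
      (by rw [iUnion_Iic]; exact gauss_integrable.integrableOn)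
  rw [iUnion_Iic, Measure.restrict_univ] at h
  exact h.const_mul _

lemma stdCDF_tendsto_atBot : Tendsto stdCDF atBot (𝓝 0) := by
  have h := MeasureTheory.tendsto_setIntegral_of_antitone (μ := volume)
      (s := fun y : ℝ => Iic (-y)) (f := fun u : ℝ => Real.exp (-u ^ 2 / 2))
      (fun y => measurableSet_Iic)
      (fun p q hpq => Iic_subset_Iic.2 (neg_le_neg hpq))
      ⟨0, gauss_integrable.integrableOn⟩
  have h2 : (⋂ y : ℝ, Iic (-y)) = (∅ : Set ℝ) := by
    apply eq_empty_iff_forall_notMem.2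
    intro x hx
    have := mem_iInter.1 hx (-(x - 1))
    simp at this
    linarith
  rw [h2] at h
  simp only [Measure.restrict_empty, integral_zero_measure] at h
  have h3 : Tendsto (fun y : ℝ => ∫ u in Iic y, Real.exp (-u ^ 2 / 2)) atBot (𝓝 0) := by
    have := h.comp (tendsto_neg_atBot_atTop : Tendsto (fun y : ℝ => -y) atBot atTop)
    refine this.congr fun y => by simp
  have := h3.const_mul ((Real.sqrt (2 * Real.pi))⁻¹)
  refine this.congr' (Eventually.of_forall fun y => ?_) |>.mono_right (by rw [mul_zero])
  rfl

lemma tendsto_decay {b : ℝ} (hb : 0 < b) (n : ℕ) :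
    Tendsto (fun t : ℝ => t⁻¹ ^ n * Real.exp (-b * t⁻¹ ^ 2)) (𝓝[>] (0:ℝ)) (𝓝 0) := by
  have h1 : Tendsto (fun u : ℝ => u ^ n * Real.exp (-b * u ^ 2)) atTop (𝓝 0) := by
    have hexp : Tendsto (fun u : ℝ => u ^ n * Real.exp (-u)) atTop (𝓝 0) :=
      Real.tendsto_pow_mul_exp_neg_atTop_nhds_zero n
    refine squeeze_zero' ?_ ?_ hexp
    · filter_upwards [eventually_ge_atTop (0:ℝ)] with u hu
      positivity
    · filter_upwards [eventually_ge_atTop (1:ℝ), eventually_ge_atTop (1/b)] with u hu1 hub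
      have : u ≤ b * u ^ 2 := by
        rw [div_le_iff₀ hb] at hub
        nlinarith
      gcongr
      linarith
  exact h1.comp tendsto_inv_nhdsGT_zero

lemma gPDF_le (p q t : ℝ) (ht : 0 < t) (ht1 : t ≤ 1) :
    gPDF (p * t⁻¹ + q * t) ≤
      (Real.sqrt (2 * Real.pi))⁻¹ * Real.exp (q ^ 2 / 2) * Real.exp (-(p ^ 2 / 4) * t⁻¹ ^ 2) := by
  unfold gPDF
  rw [mul_assoc, ← Real.exp_add]
  have hc : (0:ℝ) ≤ (Real.sqrt (2*Real.pi))⁻¹ := by positivity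
  refine mul_le_mul_of_nonneg_left (Real.exp_le_exp.2 ?_) hc
  have ht2 : t ^ 2 ≤ 1 := by nlinarith
  have h1 : (q * t) ^ 2 ≤ q ^ 2 := by nlinarith [sq_nonneg q]
  have h2 : (p * t⁻¹) ^ 2 = p ^ 2 * t⁻¹ ^ 2 := by ring
  nlinarith [sq_nonneg (p * t⁻¹ + 2 * (q * t))]

set_option maxHeartbeats 1000000 in
/-- the time-changed Black–Scholes call value
`C̃(t̃) = S Φ(d₁(t̃)) − K e^{−rt̃²} Φ(d₂(t̃))` is twice differentiable on `(0,∞)`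
and its second derivative has a finite limit as `t̃ → 0⁺`. -/
theorem stmt19 (K σ S r : ℝ) (hK : 0 < K) (hσ : 0 < σ) (hS : 0 < S)
    (d₁ d₂ C : ℝ → ℝ)
    (hd₁ : ∀ t : ℝ, d₁ t = (Real.log (S / K) + (r + σ ^ 2 / 2) * t ^ 2) / (σ * t))
    (hd₂ : ∀ t : ℝ, d₂ t = d₁ t - σ * t)
    (hC : ∀ t : ℝ, C t = S * stdCDF (d₁ t) - K * Real.exp (-r * t ^ 2) * stdCDF (d₂ t)) :
    (∀ t : ℝ, 0 < t → DifferentiableAt ℝ C t) ∧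
    (∀ t : ℝ, 0 < t → DifferentiableAt ℝ (deriv C) t) ∧
    ∃ L : ℝ, Filter.Tendsto (deriv (deriv C)) (nhdsWithin 0 (Set.Ioi 0)) (nhds L) := by
  set a := Real.log (S / K) with ha
  set m := r + σ ^ 2 / 2 with hm
  have hσt : ∀ t : ℝ, 0 < t → σ * t ≠ 0 := fun t ht => by positivity
  -- derivatives of d₁ and d₂
  have hD1 : ∀ t : ℝ, 0 < t → HasDerivAt d₁ ((m * t ^ 2 - a) / (σ * t ^ 2)) t := by
    intro t ht
    have hfun : d₁ = fun t => (a + m * t ^ 2) / (σ * t) := funext hd₁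
    rw [hfun]
    have hnum : HasDerivAt (fun t : ℝ => a + m * t ^ 2) (m * (2 * t)) t := by
      have := ((hasDerivAt_pow 2 t).const_mul m).const_add a
      refine this.congr_deriv ?_; push_cast; ring
    have hden : HasDerivAt (fun t : ℝ => σ * t) σ t := by
      simpa using (hasDerivAt_id t).const_mul σ
    have := hnum.div hden (hσt t ht)
    refine this.congr_deriv ?_
    field_simp
    ring
  have hD2 : ∀ t : ℝ, 0 < t → HasDerivAt d₂ ((m * t ^ 2 - a) / (σ * t ^ 2) - σ) t := by
    intro t ht
    have hfun : d₂ = fun t => d₁ t - σ * t := funext hd₂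
    rw [hfun]
    exact (hD1 t ht).sub (by simpa using (hasDerivAt_id t).const_mul σ)
  -- the key identity
  have hId : ∀ t : ℝ, 0 < t → S * gPDF (d₁ t) = K * Real.exp (-r * t ^ 2) * gPDF (d₂ t) := by
    intro t ht
    have h1 : σ * t * d₁ t = a + m * t ^ 2 := by
      rw [hd₁]; field_simp
    have hS' : S = K * Real.exp a := by
      rw [ha, Real.exp_log (div_pos hS hK)]
      field_simp
    rw [hd₂ t]
    unfold gPDF
    rw [hS']
    rw [show K * Real.exp a * ((Real.sqrt (2 * Real.pi))⁻¹ * Real.exp (-(d₁ t) ^ 2 / 2))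
        = K * (Real.sqrt (2 * Real.pi))⁻¹ * Real.exp (a + -(d₁ t) ^ 2 / 2) by
      rw [Real.exp_add]; ring]
    rw [show K * Real.exp (-r * t ^ 2) * ((Real.sqrt (2 * Real.pi))⁻¹ *
          Real.exp (-(d₁ t - σ * t) ^ 2 / 2))
        = K * (Real.sqrt (2 * Real.pi))⁻¹ * Real.exp (-r * t ^ 2 + -(d₁ t - σ * t) ^ 2 / 2) by
      rw [Real.exp_add]; ring]
    congr 1
    rw [Real.exp_eq_exp]
    linear_combination -h1 - t ^ 2 * hm
  -- first derivative of C
  have hCfun : C = fun t => S * stdCDF (d₁ t) - K * Real.exp (-r * t ^ 2) * stdCDF (d₂ t) :=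
    funext hC
  have hexp' : ∀ t : ℝ, HasDerivAt (fun t : ℝ => Real.exp (-r * t ^ 2))
      (Real.exp (-r * t ^ 2) * (-r * (2 * t))) t := by
    intro t
    refine (Real.hasDerivAt_exp _).comp t ?_
    have := (hasDerivAt_pow 2 t).const_mul (-r)
    convert this using 1; push_cast; ring
  set g : ℝ → ℝ := fun t => σ * S * gPDF (d₁ t)
      + 2 * r * K * (t * Real.exp (-r * t ^ 2) * stdCDF (d₂ t)) with hg
  have hCg : ∀ t : ℝ, 0 < t → HasDerivAt C (g t) t := by
    intro t ht
    have h1 : HasDerivAt (fun t => S * stdCDF (d₁ t))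
        (S * (gPDF (d₁ t) * ((m * t ^ 2 - a) / (σ * t ^ 2)))) t :=
      ((hasDerivAt_stdCDF (d₁ t)).comp t (hD1 t ht)).const_mul S
    have h2 : HasDerivAt (fun t => K * Real.exp (-r * t ^ 2) * stdCDF (d₂ t))
        (K * (Real.exp (-r * t ^ 2) * (-r * (2 * t))) * stdCDF (d₂ t)
          + K * Real.exp (-r * t ^ 2) * (gPDF (d₂ t) * ((m * t ^ 2 - a) / (σ * t ^ 2) - σ))) t := by
      have ha2 : HasDerivAt (fun t : ℝ => K * Real.exp (-r * t ^ 2))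
          (K * (Real.exp (-r * t ^ 2) * (-r * (2 * t)))) t := (hexp' t).const_mul K
      have hb2 : HasDerivAt (fun t => stdCDF (d₂ t))
          (gPDF (d₂ t) * ((m * t ^ 2 - a) / (σ * t ^ 2) - σ)) t :=
        (hasDerivAt_stdCDF (d₂ t)).comp t (hD2 t ht)
      exact ha2.mul hb2
    rw [hCfun]
    have h3 := h1.sub h2
    refine h3.congr_deriv (Eq.symm ?_)
    have hid := hId t ht
    rw [hg]
    linear_combination (σ - (m * t ^ 2 - a) / (σ * t ^ 2)) * hid
  have hderivC : ∀ t : ℝ, 0 < t → deriv C =ᶠ[𝓝 t] g := by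
    intro t ht
    filter_upwards [isOpen_Ioi.mem_nhds ht] with s hs
    exact (hCg s hs).deriv
  -- second derivative
  set h : ℝ → ℝ := fun t =>
      σ * S * (-(d₁ t) * gPDF (d₁ t) * ((m * t ^ 2 - a) / (σ * t ^ 2)))
    + 2 * r * K * ((1 * Real.exp (-r * t ^ 2)
          + t * (Real.exp (-r * t ^ 2) * (-r * (2 * t)))) * stdCDF (d₂ t)
        + t * Real.exp (-r * t ^ 2) * (gPDF (d₂ t) * ((m * t ^ 2 - a) / (σ * t ^ 2) - σ))) with hh
  have hgh : ∀ t : ℝ, 0 < t → HasDerivAt g (h t) t := by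
    intro t ht
    have h1 : HasDerivAt (fun t => σ * S * gPDF (d₁ t))
        (σ * S * (-(d₁ t) * gPDF (d₁ t) * ((m * t ^ 2 - a) / (σ * t ^ 2)))) t := by
      exact ((hasDerivAt_gPDF (d₁ t)).comp t (hD1 t ht)).const_mul (σ * S)
    have h2 : HasDerivAt (fun t : ℝ => t * Real.exp (-r * t ^ 2))
        (1 * Real.exp (-r * t ^ 2) + t * (Real.exp (-r * t ^ 2) * (-r * (2 * t)))) t :=
      (hasDerivAt_id t).mul (hexp' t)
    have h3 : HasDerivAt (fun t => stdCDF (d₂ t))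
        (gPDF (d₂ t) * ((m * t ^ 2 - a) / (σ * t ^ 2) - σ)) t :=
      (hasDerivAt_stdCDF (d₂ t)).comp t (hD2 t ht)
    have h4 := (h2.mul h3).const_mul (2 * r * K)
    have h5 := h1.add h4
    rw [hg, hh]
    exact h5
  have hdiff2 : ∀ t : ℝ, 0 < t → DifferentiableAt ℝ (deriv C) t := by
    intro t ht
    exact (hgh t ht).differentiableAt.congr_of_eventuallyEq (hderivC t ht)
  have hD2C : ∀ t : ℝ, 0 < t → deriv (deriv C) t = h t := by
    intro t ht
    rw [(hderivC t ht).deriv_eq]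
    exact (hgh t ht).deriv
  refine ⟨fun t ht => (hCg t ht).differentiableAt, hdiff2, ?_⟩
  suffices hsuf : ∃ L : ℝ, Tendsto h (𝓝[>] (0:ℝ)) (𝓝 L) by
    obtain ⟨L, hL⟩ := hsuf
    refine ⟨L, hL.congr' ?_⟩
    filter_upwards [self_mem_nhdsWithin] with t ht
    exact (hD2C t ht).symm
  -- formulas for d₁, d₂ near 0
  have hd₁' : ∀ t : ℝ, 0 < t → d₁ t = (a / σ) * t⁻¹ + (m / σ) * t := by
    intro t ht
    rw [hd₁]
    field_simp
  have hd₂' : ∀ t : ℝ, 0 < t → d₂ t = (a / σ) * t⁻¹ + (m / σ - σ) * t := by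
    intro t ht
    rw [hd₂, hd₁' t ht]
    ring
  rcases eq_or_ne a 0 with h0 | h0
  · -- `S = K`: everything is continuous up to `t = 0`
    refine ⟨σ * S * (-((m / σ) * 0) * gPDF ((m / σ) * 0) * (m / σ))
      + 2 * r * K * ((1 * Real.exp (-r * 0 ^ 2)
            + 0 * (Real.exp (-r * 0 ^ 2) * (-r * (2 * 0)))) * stdCDF ((m / σ - σ) * 0)
          + 0 * Real.exp (-r * 0 ^ 2) * (gPDF ((m / σ - σ) * 0) * (m / σ - σ))), ?_⟩
    have hFc : ContinuousAt (fun t : ℝ =>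
        σ * S * (-((m / σ) * t) * gPDF ((m / σ) * t) * (m / σ))
      + 2 * r * K * ((1 * Real.exp (-r * t ^ 2)
            + t * (Real.exp (-r * t ^ 2) * (-r * (2 * t)))) * stdCDF ((m / σ - σ) * t)
          + t * Real.exp (-r * t ^ 2) * (gPDF ((m / σ - σ) * t) * (m / σ - σ)))) 0 := by
      have hg1 : Continuous gPDF := by unfold gPDF; fun_prop
      have hg2 : Continuous stdCDF := continuous_stdCDF
      fun_prop
    refine Tendsto.congr' ?_ (hFc.tendsto.mono_left nhdsWithin_le_nhds)
    filter_upwards [self_mem_nhdsWithin] with t ht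
    have ht' : (0:ℝ) < t := ht
    have e1 : (m * t ^ 2 - a) / (σ * t ^ 2) = m / σ := by
      rw [h0, sub_zero]
      rw [mul_comm m (t ^ 2), mul_comm σ (t ^ 2), mul_div_mul_left _ _ (by positivity : t ^ 2 ≠ 0)]
    have e2 : d₁ t = (m / σ) * t := by
      rw [hd₁' t ht', h0]
      simp
    have e3 : d₂ t = (m / σ - σ) * t := by
      rw [hd₂' t ht', h0]
      simp
    simp only [hh, e2, e3, e1]
  · -- `S ≠ K`: the singular terms are killed by the Gaussian factor
    have hbpos : 0 < (a / σ) ^ 2 / 4 := by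
      have : a / σ ≠ 0 := div_ne_zero h0 hσ.ne'
      positivity
    -- limit of `stdCDF (d₂ t)`
    have hΦ : ∃ l : ℝ, Tendsto (fun t => stdCDF (d₂ t)) (𝓝[>] (0:ℝ)) (𝓝 l) := by
      have hlin : Tendsto (fun t : ℝ => (m / σ - σ) * t) (𝓝[>] (0:ℝ)) (𝓝 0) := by
        have h1 : Tendsto (fun t : ℝ => (m / σ - σ) * t) (𝓝 (0:ℝ)) (𝓝 ((m / σ - σ) * 0)) :=
          (continuous_const.mul continuous_id).tendsto 0
        rw [mul_zero] at h1
        exact h1.mono_left nhdsWithin_le_nhds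
      have hcongr : ∀ᶠ t in 𝓝[>] (0:ℝ),
          (a / σ) * t⁻¹ + (m / σ - σ) * t = d₂ t := by
        filter_upwards [self_mem_nhdsWithin] with t ht
        exact (hd₂' t ht).symm
      rcases h0.lt_or_gt with hneg | hpos
      · have h1 : Tendsto (fun t : ℝ => (a / σ) * t⁻¹) (𝓝[>] (0:ℝ)) atBot :=
          (tendsto_const_mul_atBot_of_neg (div_neg_of_neg_of_pos hneg hσ)).2
            tendsto_inv_nhdsGT_zero
        have h3 : Tendsto d₂ (𝓝[>] (0:ℝ)) atBot := (h1.atBot_add hlin).congr' hcongr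
        exact ⟨0, stdCDF_tendsto_atBot.comp h3⟩
      · have h1 : Tendsto (fun t : ℝ => (a / σ) * t⁻¹) (𝓝[>] (0:ℝ)) atTop :=
          Tendsto.const_mul_atTop (div_pos hpos hσ) tendsto_inv_nhdsGT_zero
        have h3 : Tendsto d₂ (𝓝[>] (0:ℝ)) atTop := (h1.atTop_add hlin).congr' hcongr
        exact ⟨_, stdCDF_tendsto_atTop.comp h3⟩
    obtain ⟨l, hl⟩ := hΦ
    -- the quotient bound
    have hq : ∀ t : ℝ, t ∈ Ioo (0:ℝ) 1 →
        |(m * t ^ 2 - a) / (σ * t ^ 2)| ≤ ((|m| + |a|) / σ) * t⁻¹ ^ 2 := by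
      intro t ⟨ht0, ht1⟩
      rw [abs_div, abs_of_pos (by positivity : (0:ℝ) < σ * t ^ 2)]
      rw [div_le_iff₀ (by positivity)]
      have h1 : |m * t ^ 2 - a| ≤ |m| + |a| := by
        refine (abs_sub _ _).trans ?_
        have ht2 : t ^ 2 ≤ 1 := by nlinarith
        have : |m * t ^ 2| ≤ |m| := by
          rw [abs_mul, abs_of_nonneg (sq_nonneg t)]
          nlinarith [abs_nonneg m]
        linarith
      refine h1.trans (le_of_eq ?_)
      field_simp
    have htinv : ∀ t : ℝ, t ∈ Ioo (0:ℝ) 1 → 1 ≤ t⁻¹ := fun t ht => (one_le_inv₀ ht.1).2 ht.2.le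
    -- first singular term tends to 0
    have hA : Tendsto (fun t : ℝ =>
        σ * S * (-(d₁ t) * gPDF (d₁ t) * ((m * t ^ 2 - a) / (σ * t ^ 2))))
        (𝓝[>] (0:ℝ)) (𝓝 0) := by
      have hdec := (tendsto_decay hbpos 3).const_mul
        (σ * S * ((|a / σ| + |m / σ|) *
          ((Real.sqrt (2 * Real.pi))⁻¹ * Real.exp ((m / σ) ^ 2 / 2) * ((|m| + |a|) / σ))))
      rw [mul_zero] at hdec
      refine squeeze_zero_norm' ?_ hdec
      filter_upwards [Ioo_mem_nhdsGT_of_mem (show (0:ℝ) ∈ Ico (0:ℝ) 1 by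
        exact ⟨le_refl 0, one_pos⟩)] with t ht
      obtain ⟨ht0, ht1⟩ := ht
      have hgb : gPDF (d₁ t) ≤ (Real.sqrt (2 * Real.pi))⁻¹ * Real.exp ((m / σ) ^ 2 / 2) *
          Real.exp (-((a / σ) ^ 2 / 4) * t⁻¹ ^ 2) := by
        rw [hd₁' t ht0]
        exact gPDF_le (a / σ) (m / σ) t ht0 ht1.le
      have hd1b : |d₁ t| ≤ (|a / σ| + |m / σ|) * t⁻¹ := by
        rw [hd₁' t ht0]
        refine (abs_add_le _ _).trans ?_
        rw [abs_mul, abs_mul, abs_of_pos (inv_pos.2 ht0), abs_of_pos ht0]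
        have : |m / σ| * t ≤ |m / σ| * t⁻¹ :=
          mul_le_mul_of_nonneg_left (ht1.le.trans (htinv t ⟨ht0, ht1⟩)) (abs_nonneg _)
        linarith
      calc ‖σ * S * (-(d₁ t) * gPDF (d₁ t) * ((m * t ^ 2 - a) / (σ * t ^ 2)))‖
          = σ * S * (|d₁ t| * (gPDF (d₁ t) * |(m * t ^ 2 - a) / (σ * t ^ 2)|)) := by
            simp only [Real.norm_eq_abs, abs_mul, abs_neg, abs_of_pos (gPDF_pos (d₁ t)),
              abs_of_pos hσ, abs_of_pos hS]
            ring
        _ ≤ σ * S * ((((|a / σ| + |m / σ|)) * t⁻¹) *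
              (((Real.sqrt (2 * Real.pi))⁻¹ * Real.exp ((m / σ) ^ 2 / 2) *
                Real.exp (-((a / σ) ^ 2 / 4) * t⁻¹ ^ 2)) *
               (((|m| + |a|) / σ) * t⁻¹ ^ 2))) := by
            have h1 := hq t ⟨ht0, ht1⟩
            have hpos1 : (0:ℝ) < Real.sqrt (2 * Real.pi) := by
              have := Real.pi_pos; positivity
            gcongr <;> first
              | exact (mul_pos hσ hS).le
              | exact (gPDF_pos _).le
              | exact abs_nonneg _
              | exact mul_nonneg (gPDF_pos _).le (abs_nonneg _)
              | positivity
              | exact hd1b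
              | exact hgb
              | exact h1
        _ = σ * S * ((|a / σ| + |m / σ|) *
              ((Real.sqrt (2 * Real.pi))⁻¹ * Real.exp ((m / σ) ^ 2 / 2) * ((|m| + |a|) / σ))) *
            (t⁻¹ ^ 3 * Real.exp (-((a / σ) ^ 2 / 4) * t⁻¹ ^ 2)) := by
            ring
    -- the bounded factor in front of `stdCDF (d₂ t)`
    have hB : Tendsto (fun t : ℝ => (1 * Real.exp (-r * t ^ 2)
          + t * (Real.exp (-r * t ^ 2) * (-r * (2 * t)))) * stdCDF (d₂ t))
        (𝓝[>] (0:ℝ)) (𝓝 (1 * l)) := by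
      have hc2 : Continuous fun t : ℝ => 1 * Real.exp (-r * t ^ 2)
          + t * (Real.exp (-r * t ^ 2) * (-r * (2 * t))) := by fun_prop
      have h1 := (hc2.tendsto 0).mono_left (nhdsWithin_le_nhds (s := Set.Ioi (0:ℝ)))
      have h2 : (1 * Real.exp (-r * (0:ℝ) ^ 2)
          + (0:ℝ) * (Real.exp (-r * (0:ℝ) ^ 2) * (-r * (2 * 0)))) = 1 := by
        norm_num
      rw [h2] at h1
      exact h1.mul hl
    -- last singular term tends to 0
    have hCc : Tendsto (fun t : ℝ => t * Real.exp (-r * t ^ 2) *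
          (gPDF (d₂ t) * ((m * t ^ 2 - a) / (σ * t ^ 2) - σ)))
        (𝓝[>] (0:ℝ)) (𝓝 0) := by
      have hdec := (tendsto_decay hbpos 2).const_mul
        (Real.exp |r| * ((Real.sqrt (2 * Real.pi))⁻¹ * Real.exp ((m / σ - σ) ^ 2 / 2) *
          ((|m| + |a|) / σ + σ)))
      rw [mul_zero] at hdec
      refine squeeze_zero_norm' ?_ hdec
      filter_upwards [Ioo_mem_nhdsGT_of_mem (show (0:ℝ) ∈ Ico (0:ℝ) 1 by
        exact ⟨le_refl 0, one_pos⟩)] with t ht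
      obtain ⟨ht0, ht1⟩ := ht
      have hgb : gPDF (d₂ t) ≤ (Real.sqrt (2 * Real.pi))⁻¹ * Real.exp ((m / σ - σ) ^ 2 / 2) *
          Real.exp (-((a / σ) ^ 2 / 4) * t⁻¹ ^ 2) := by
        rw [hd₂' t ht0]
        exact gPDF_le (a / σ) (m / σ - σ) t ht0 ht1.le
      have hexpb : Real.exp (-r * t ^ 2) ≤ Real.exp |r| := by
        refine Real.exp_le_exp.2 ?_
        have ht2 : t ^ 2 ≤ 1 := by nlinarith
        nlinarith [neg_le_abs r, abs_nonneg r, sq_nonneg t]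
      have hDb : |(m * t ^ 2 - a) / (σ * t ^ 2) - σ| ≤ ((|m| + |a|) / σ + σ) * t⁻¹ ^ 2 := by
        refine (abs_sub _ _).trans ?_
        have h1 := hq t ⟨ht0, ht1⟩
        have h2 : 1 ≤ t⁻¹ ^ 2 := by
          have := htinv t ⟨ht0, ht1⟩
          nlinarith
        have h3 : |σ| ≤ σ * t⁻¹ ^ 2 := by
          rw [abs_of_pos hσ]
          nlinarith
        calc |(m * t ^ 2 - a) / (σ * t ^ 2)| + |σ|
            ≤ ((|m| + |a|) / σ) * t⁻¹ ^ 2 + σ * t⁻¹ ^ 2 := add_le_add h1 h3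
          _ = ((|m| + |a|) / σ + σ) * t⁻¹ ^ 2 := by ring
      calc ‖t * Real.exp (-r * t ^ 2) *
            (gPDF (d₂ t) * ((m * t ^ 2 - a) / (σ * t ^ 2) - σ))‖
          = t * Real.exp (-r * t ^ 2) *
            (gPDF (d₂ t) * |(m * t ^ 2 - a) / (σ * t ^ 2) - σ|) := by
            simp only [Real.norm_eq_abs, abs_mul, abs_of_pos ht0,
              abs_of_pos (Real.exp_pos (-r * t ^ 2)), abs_of_pos (gPDF_pos (d₂ t))]
        _ ≤ 1 * Real.exp |r| *
            (((Real.sqrt (2 * Real.pi))⁻¹ * Real.exp ((m / σ - σ) ^ 2 / 2) *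
              Real.exp (-((a / σ) ^ 2 / 4) * t⁻¹ ^ 2)) *
             (((|m| + |a|) / σ + σ) * t⁻¹ ^ 2)) := by
            have hpos1 : (0:ℝ) < Real.sqrt (2 * Real.pi) := by
              have := Real.pi_pos; positivity
            gcongr <;> first
              | exact (gPDF_pos _).le
              | exact abs_nonneg _
              | exact mul_nonneg (gPDF_pos _).le (abs_nonneg _)
              | positivity
              | exact ht1.le
              | exact hgb
              | exact hDb
              | exact hexpb
        _ = Real.exp |r| * ((Real.sqrt (2 * Real.pi))⁻¹ * Real.exp ((m / σ - σ) ^ 2 / 2) *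
              ((|m| + |a|) / σ + σ)) *
            (t⁻¹ ^ 2 * Real.exp (-((a / σ) ^ 2 / 4) * t⁻¹ ^ 2)) := by
            ring
    refine ⟨0 + 2 * r * K * (1 * l + 0), ?_⟩
    rw [hh]
    exact hA.add ((hB.add hCc).const_mul (2 * r * K))
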